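/- arXiv:2402.11904 — 6 statements merged into one kernel-verified Lean document; each statement's English description precedes it below -/
import Mathlib

section
/- Let n ≥ 1, let W : ℝⁿ → ℝ be measurable and bounded, and let σ > 0. Then for every x ∈ ℝⁿ and every coordinate i, the partial derivative of the Gaussian smoothing W̃^σ with respect to xᵢ exists and equals ∂W̃^σ/∂xᵢ (x) = (1/σ) · ∫ W(x + σu) · uᵢ dγₙ(u), where uᵢ is the i-th coordinate of u. -/
open MeasureTheory ProbabilityTheory

open scoped ENNReal NNReal

section GaussianSmoothingAux

lemma pdf_shift' (c y : ℝ) :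
    gaussianPDFReal c 1 y = gaussianPDFReal 0 1 y * Real.exp (c * y - c^2/2) := by
  simp only [gaussianPDFReal, NNReal.coe_one, mul_one, sub_zero]
  rw [mul_assoc, ← Real.exp_add]
  congr 1
  ring

lemma integrable_rho' (c : ℝ) :
    Integrable (fun y => Real.exp (c * y - c^2/2)) (gaussianReal 0 1) := by
  rw [gaussianReal_of_var_ne_zero _ one_ne_zero, gaussianPDF_def]
  rw [show (fun x => ENNReal.ofReal (gaussianPDFReal 0 1 x))
      = (fun x => ((gaussianPDFReal 0 1 x).toNNReal : ℝ≥0∞)) from rfl]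
  rw [integrable_withDensity_iff_integrable_smul
    ((measurable_gaussianPDFReal 0 1).real_toNNReal)]
  have : (fun y => ((gaussianPDFReal 0 1 y).toNNReal : ℝ≥0) • Real.exp (c * y - c^2/2))
      = fun y => gaussianPDFReal c 1 y := by
    funext y
    rw [NNReal.smul_def, Real.coe_toNNReal _ (gaussianPDFReal_nonneg 0 1 y), smul_eq_mul,
      pdf_shift' c y]
  rw [this]
  exact integrable_gaussianPDFReal c 1

lemma oneD' (h : ℝ → ℝ) (hh : Measurable h) (c : ℝ) :
    ∫ y, h (y + c) ∂(gaussianReal 0 1)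
      = ∫ y, h y * Real.exp (c * y - c^2/2) ∂(gaussianReal 0 1) := by
  have h1 : ∫ y, h (y + c) ∂(gaussianReal 0 1) = ∫ y, h y ∂(gaussianReal c 1) := by
    rw [show gaussianReal c 1 = gaussianReal (0 + c) 1 by rw [zero_add],
      ← gaussianReal_map_add_const c,
      integral_map (by fun_prop) hh.aestronglyMeasurable]
  rw [h1, gaussianReal_of_var_ne_zero _ one_ne_zero,
    gaussianReal_of_var_ne_zero _ one_ne_zero, gaussianPDF_def, gaussianPDF_def]
  rw [show (fun x => ENNReal.ofReal (gaussianPDFReal c 1 x))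
      = (fun x => ((gaussianPDFReal c 1 x).toNNReal : ℝ≥0∞)) from rfl]
  rw [show (fun x => ENNReal.ofReal (gaussianPDFReal 0 1 x))
      = (fun x => ((gaussianPDFReal 0 1 x).toNNReal : ℝ≥0∞)) from rfl]
  rw [integral_withDensity_eq_integral_smul ((measurable_gaussianPDFReal c 1).real_toNNReal) h,
    integral_withDensity_eq_integral_smul ((measurable_gaussianPDFReal 0 1).real_toNNReal)]
  congr 1
  funext y
  rw [NNReal.smul_def, NNReal.smul_def, Real.coe_toNNReal _ (gaussianPDFReal_nonneg c 1 y),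
    Real.coe_toNNReal _ (gaussianPDFReal_nonneg 0 1 y), pdf_shift' c y, smul_eq_mul, smul_eq_mul]
  ring

lemma integrable_exp_mul_gauss' (t : ℝ) :
    Integrable (fun y => Real.exp (t * y)) (gaussianReal 0 1) := by
  have := (integrable_rho' t).const_mul (Real.exp (t^2/2))
  convert this using 2 with y
  rw [← Real.exp_add]
  ring_nf

lemma integrable_oneD_bound' :
    Integrable (fun y => (|y| + 1) * Real.exp (|y| + 1)) (gaussianReal 0 1) := by
  have hb := (((integrable_exp_mul_gauss' 2).add (integrable_exp_mul_gauss' (-2))).const_mul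
    (Real.exp 1))
  refine hb.mono' (Measurable.aestronglyMeasurable (by measurability)) (ae_of_all _ fun y => ?_)
  rw [Real.norm_eq_abs, abs_of_nonneg (by positivity)]
  have h1 : |y| + 1 ≤ Real.exp |y| := by
    have := Real.add_one_le_exp |y|; linarith
  have h2 : Real.exp (|y| + 1) = Real.exp 1 * Real.exp |y| := by
    rw [← Real.exp_add]; ring_nf
  have h3 : Real.exp |y| * Real.exp |y| = Real.exp (2 * |y|) := by
    rw [← Real.exp_add]; ring_nf
  have h4 : Real.exp (2 * |y|) ≤ Real.exp (2 * y) + Real.exp (-2 * y) := by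
    rcases abs_cases y with ⟨h, _⟩ | ⟨h, _⟩
    · rw [h]; linarith [(Real.exp_pos (-2 * y)).le]
    · rw [h, show 2 * -y = -2 * y by ring]; linarith [(Real.exp_pos (2 * y)).le]
  calc (|y| + 1) * Real.exp (|y| + 1) ≤ Real.exp |y| * (Real.exp 1 * Real.exp |y|) := by
        rw [← h2]; exact mul_le_mul_of_nonneg_right h1 (Real.exp_pos _).le
    _ = Real.exp 1 * Real.exp (2 * |y|) := by rw [← h3]; ring
    _ ≤ Real.exp 1 * (Real.exp (2 * y) + Real.exp (-2 * y)) :=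
        mul_le_mul_of_nonneg_left h4 (Real.exp_pos _).le

variable {n : ℕ}

noncomputable def eT (i : Fin n) :
    (Fin n → ℝ) ≃ᵐ ℝ × ({j : Fin n // ¬ j = i} → ℝ) :=
  (MeasurableEquiv.piEquivPiSubtypeProd (fun _ : Fin n => ℝ) (fun j => j = i)).trans
    ((MeasurableEquiv.piUnique (fun _ : {j : Fin n // j = i} => ℝ)).prodCongr
      (MeasurableEquiv.refl _))

lemma eT_apply (i : Fin n) (u : Fin n → ℝ) :
    eT i u = (u i, fun j : {j : Fin n // ¬ j = i} => u ↑j) := rfl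

lemma eT_mp (i : Fin n) :
    MeasurePreserving (eT i) (Measure.pi fun _ : Fin n => gaussianReal 0 1)
      ((gaussianReal 0 1).prod
        (Measure.pi fun _ : {j : Fin n // ¬ j = i} => gaussianReal 0 1)) := by
  have e1 := measurePreserving_piEquivPiSubtypeProd
    (fun _ : Fin n => gaussianReal 0 1) (fun j => j = i)
  have e2 : MeasurePreserving (MeasurableEquiv.piUnique fun _ : {j : Fin n // j = i} => ℝ)
      (@Measure.pi {j : Fin n // j = i} _ (Subtype.fintype _) _ (fun _ => gaussianReal 0 1))
      (gaussianReal 0 1) := by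
    convert measurePreserving_piUnique (fun _ : {j : Fin n // j = i} => gaussianReal 0 1)
  exact (e2.prod (MeasurePreserving.id _)).comp e1

lemma eT_symm_add (i : Fin n) (z : ℝ × ({j : Fin n // ¬ j = i} → ℝ)) (c : ℝ) :
    (eT i).symm z + c • (Pi.single i 1 : Fin n → ℝ) = (eT i).symm (z.1 + c, z.2) := by
  apply (eT i).injective
  rw [MeasurableEquiv.apply_symm_apply]
  set u := (eT i).symm z with hu
  have h1 : eT i u = z := (eT i).apply_symm_apply z
  have hui : u i = z.1 := congrArg Prod.fst h1
  have hw : ∀ j : {j : Fin n // ¬ j = i}, u ↑j = z.2 j :=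
    fun j => congrFun (congrArg Prod.snd h1) j
  rw [eT_apply]
  refine Prod.ext ?_ ?_ <;> dsimp only
  · simp only [Pi.add_apply, Pi.smul_apply, Pi.single_eq_same, smul_eq_mul, mul_one, hui]
  · funext j
    simp only [Pi.add_apply, Pi.smul_apply, Pi.single_eq_of_ne j.2, smul_eq_mul, mul_zero,
      add_zero, hw j]

lemma shift_lemma (i : Fin n) (g : (Fin n → ℝ) → ℝ) (hg : Measurable g) (M : ℝ)
    (hgM : ∀ u, |g u| ≤ M) (c : ℝ) :
    ∫ u, g (u + c • (Pi.single i 1 : Fin n → ℝ)) ∂(Measure.pi fun _ : Fin n => gaussianReal 0 1)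
      = ∫ u, g u * Real.exp (c * u i - c^2/2)
          ∂(Measure.pi fun _ : Fin n => gaussianReal 0 1) := by
  set ν := gaussianReal 0 1
  set π₂ := Measure.pi fun _ : {j : Fin n // ¬ j = i} => gaussianReal 0 1
  set S := ⇑(eT i).symm with hSdef
  have hS : Measurable S := (eT i).symm.measurable
  set f₁ : ℝ × ({j : Fin n // ¬ j = i} → ℝ) → ℝ :=
    fun z => g (S z + c • (Pi.single i 1 : Fin n → ℝ)) with hf₁
  set f₂ : ℝ × ({j : Fin n // ¬ j = i} → ℝ) → ℝ :=
    fun z => g (S z) * Real.exp (c * z.1 - c^2/2) with hf₂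
  have hf₁m : Measurable f₁ := hg.comp (hS.add_const _)
  have hf₂m : Measurable f₂ := (hg.comp hS).mul (by fun_prop)
  have int1 : Integrable f₁ (ν.prod π₂) := by
    refine (integrable_const M).mono' hf₁m.aestronglyMeasurable (ae_of_all _ fun z => ?_)
    simpa using hgM _
  have int2 : Integrable f₂ (ν.prod π₂) := by
    have hb : Integrable (fun z : ℝ × ({j : Fin n // ¬ j = i} → ℝ) =>
        M * (Real.exp (c * z.1 - c^2/2) * 1)) (ν.prod π₂) :=
      ((integrable_rho' c).mul_prod (integrable_const 1)).const_mul M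
    refine hb.mono' hf₂m.aestronglyMeasurable (ae_of_all _ fun z => ?_)
    rw [Real.norm_eq_abs, abs_mul, abs_of_pos (Real.exp_pos _), mul_one]
    exact mul_le_mul_of_nonneg_right (hgM _) (Real.exp_pos _).le
  have step1 : ∫ u, g (u + c • (Pi.single i 1 : Fin n → ℝ))
      ∂(Measure.pi fun _ : Fin n => gaussianReal 0 1) = ∫ z, f₁ z ∂(ν.prod π₂) := by
    rw [← (eT_mp i).integral_comp (eT i).measurableEmbedding f₁]
    congr 1
    funext u
    show g (u + _) = g (S (eT i u) + _)
    rw [hSdef, (eT i).symm_apply_apply]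
  have step5 : ∫ z, f₂ z ∂(ν.prod π₂) = ∫ u, g u * Real.exp (c * u i - c^2/2)
      ∂(Measure.pi fun _ : Fin n => gaussianReal 0 1) := by
    rw [← (eT_mp i).integral_comp (eT i).measurableEmbedding f₂]
    congr 1
    funext u
    show g (S (eT i u)) * Real.exp (c * (eT i u).1 - c^2/2) = _
    rw [hSdef, (eT i).symm_apply_apply, eT_apply]
  rw [step1, integral_prod_symm f₁ int1, ← step5, integral_prod_symm f₂ int2]
  congr 1
  funext w
  have key : ∀ y : ℝ, f₁ (y, w) = (fun y => g (S (y, w))) (y + c) := by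
    intro y
    show g (S (y, w) + _) = g (S (y + c, w))
    rw [hSdef, eT_symm_add i (y, w) c]
  calc ∫ y, f₁ (y, w) ∂ν = ∫ y, (fun y => g (S (y, w))) (y + c) ∂ν := by
        congr 1; funext y; exact key y
    _ = ∫ y, g (S (y, w)) * Real.exp (c * y - c^2/2) ∂ν :=
        oneD' _ ((hg.comp hS).comp (measurable_id.prodMk measurable_const)) c
    _ = ∫ y, f₂ (y, w) ∂ν := rfl

lemma integrable_comp_eval (i : Fin n) (b : ℝ → ℝ) (hbm : Measurable b)
    (hb : Integrable b (gaussianReal 0 1)) :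
    Integrable (fun u : Fin n → ℝ => b (u i))
      (Measure.pi fun _ : Fin n => gaussianReal 0 1) := by
  have h2 : Integrable (fun z : ℝ × ({j : Fin n // ¬ j = i} → ℝ) => b z.1 * 1)
      ((gaussianReal 0 1).prod (Measure.pi fun _ : {j : Fin n // ¬ j = i} => gaussianReal 0 1)) :=
    hb.mul_prod (integrable_const 1)
  have h3 := ((eT_mp i).integrable_comp_emb (eT i).measurableEmbedding).mpr h2
  have : ((fun z : ℝ × ({j : Fin n // ¬ j = i} → ℝ) => b z.1 * 1) ∘ (eT i))
      = fun u : Fin n → ℝ => b (u i) * 1 := rfl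
  rw [this] at h3
  simpa using h3

lemma hasDeriv_H (i : Fin n) (g : (Fin n → ℝ) → ℝ) (hg : Measurable g) (M : ℝ)
    (hgM : ∀ u, |g u| ≤ M) :
    HasDerivAt (fun c : ℝ => ∫ u, g u * Real.exp (c * u i - c^2/2)
        ∂(Measure.pi fun _ : Fin n => gaussianReal 0 1))
      (∫ u, g u * u i ∂(Measure.pi fun _ : Fin n => gaussianReal 0 1)) 0 := by
  have hM0 : 0 ≤ M := le_trans (abs_nonneg _) (hgM 0)
  set γ := Measure.pi fun _ : Fin n => gaussianReal 0 1 with hγdef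
  set F : ℝ → (Fin n → ℝ) → ℝ := fun c u => g u * Real.exp (c * u i - c^2/2) with hF
  set F' : ℝ → (Fin n → ℝ) → ℝ :=
    fun c u => g u * ((u i - c) * Real.exp (c * u i - c^2/2)) with hF'
  set bound : (Fin n → ℝ) → ℝ := fun u => M * ((|u i| + 1) * Real.exp (|u i| + 1)) with hbd
  have hFmeas : ∀ c : ℝ, AEStronglyMeasurable (F c) γ := fun c =>
    (hg.mul (by fun_prop)).aestronglyMeasurable
  have hF'meas : AEStronglyMeasurable (F' 0) γ :=
    (hg.mul (by fun_prop)).aestronglyMeasurable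
  have hFint : Integrable (F 0) γ := by
    refine (integrable_const M).mono' (hFmeas 0) (ae_of_all _ fun u => ?_)
    have hFu : F 0 u = g u := by rw [hF]; norm_num
    rw [hFu, Real.norm_eq_abs]
    exact hgM u
  have hbound_int : Integrable bound γ := by
    refine Integrable.const_mul ?_ M
    exact integrable_comp_eval i (fun y => (|y| + 1) * Real.exp (|y| + 1))
      (by measurability) integrable_oneD_bound'
  have h_bnd : ∀ᵐ u ∂γ, ∀ c ∈ Metric.ball (0:ℝ) 1, ‖F' c u‖ ≤ bound u := by
    refine ae_of_all _ fun u c hc => ?_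
    have hc1 : |c| < 1 := by simpa [Real.dist_eq] using hc
    rw [hF', Real.norm_eq_abs, abs_mul, abs_mul, abs_of_pos (Real.exp_pos _), hbd]
    have e1 : |u i - c| ≤ |u i| + 1 := by
      calc |u i - c| ≤ |u i| + |c| := abs_sub _ _
        _ ≤ |u i| + 1 := by linarith
    have e2 : Real.exp (c * u i - c^2/2) ≤ Real.exp (|u i| + 1) := by
      apply Real.exp_le_exp.mpr
      have : c * u i ≤ |c * u i| := le_abs_self _
      rw [abs_mul] at this
      nlinarith [abs_nonneg (u i), abs_nonneg c, sq_nonneg c]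
    calc |g u| * (|u i - c| * Real.exp (c * u i - c^2/2))
        ≤ M * (|u i - c| * Real.exp (c * u i - c^2/2)) := by
          apply mul_le_mul_of_nonneg_right (hgM u)
          positivity
      _ ≤ M * ((|u i| + 1) * Real.exp (|u i| + 1)) := by
          apply mul_le_mul_of_nonneg_left _ hM0
          exact mul_le_mul e1 e2 (Real.exp_pos _).le (by positivity)
  have h_diff : ∀ᵐ u ∂γ, ∀ c ∈ Metric.ball (0:ℝ) 1, HasDerivAt (fun c => F c u) (F' c u) c := by
    refine ae_of_all _ fun u c _ => ?_
    set y := u i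
    have d1 : HasDerivAt (fun c : ℝ => c * y - c^2/2) (y - c) c := by
      have h1 : HasDerivAt (fun c : ℝ => c * y) (1 * y) c := (hasDerivAt_id c).mul_const y
      have h2 : HasDerivAt (fun c : ℝ => c^2/2) ((2 * c ^ 1)/2) c :=
        (hasDerivAt_pow 2 c).div_const 2
      have := h1.sub h2
      refine this.congr_deriv ?_
      push_cast
      ring
    have d2 := d1.exp
    have d3 := d2.const_mul (g u)
    refine d3.congr_deriv ?_
    ring
  have key := hasDerivAt_integral_of_dominated_loc_of_deriv_le (Metric.ball_mem_nhds 0 zero_lt_one)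
    (Filter.Eventually.of_forall hFmeas) hFint hF'meas h_bnd hbound_int h_diff
  have := key.2
  refine this.congr_deriv ?_
  congr 1 with u
  rw [hF']
  norm_num
end GaussianSmoothingAux


/-- For `n ≥ 1`, a measurable bounded `W : ℝⁿ → ℝ` and `σ > 0`, the partial
derivative of the Gaussian smoothing `W̃^σ(x) = ∫ W(x + σu) dγₙ(u)` with respect to the `i`-th
coordinate exists at every `x` and equals `(1/σ) * ∫ W(x + σu) * uᵢ dγₙ(u)`. -/
theorem gaussian_smoothing_partial_deriv
    (n : ℕ) (hn : 1 ≤ n)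
    (W : (Fin n → ℝ) → ℝ) (hW : Measurable W)
    (M : ℝ) (hM : ∀ x, |W x| ≤ M)
    (σ : ℝ) (hσ : 0 < σ)
    (γ : Measure (Fin n → ℝ))
    (hγ : γ = Measure.pi fun _ : Fin n => gaussianReal 0 1)
    (x : Fin n → ℝ) (i : Fin n) :
    HasDerivAt (fun t : ℝ => ∫ u, W (Function.update x i t + σ • u) ∂γ)
      ((1 / σ) * ∫ u, W (x + σ • u) * u i ∂γ) (x i) := by
  subst hγ
  set g : (Fin n → ℝ) → ℝ := fun u => W (x + σ • u) with hgdef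
  have hg : Measurable g := hW.comp (by fun_prop)
  have hgM : ∀ u, |g u| ≤ M := fun u => hM _
  have harg : ∀ t : ℝ, ∀ u : Fin n → ℝ,
      Function.update x i t + σ • u
        = x + σ • (u + ((t - x i)/σ) • (Pi.single i 1 : Fin n → ℝ)) := by
    intro t u
    funext j
    by_cases hj : j = i
    · subst hj
      simp only [Pi.add_apply, Pi.smul_apply, Function.update_self, Pi.single_eq_same,
        smul_eq_mul, mul_one]
      field_simp
      ring
    · simp only [Pi.add_apply, Pi.smul_apply, Function.update_of_ne hj,
        Pi.single_eq_of_ne hj, smul_eq_mul, mul_zero, add_zero]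
  have hfun : (fun t : ℝ => ∫ u, W (Function.update x i t + σ • u)
      ∂(Measure.pi fun _ : Fin n => gaussianReal 0 1))
      = fun t : ℝ => ∫ u, g u * Real.exp (((t - x i)/σ) * u i - ((t - x i)/σ)^2/2)
          ∂(Measure.pi fun _ : Fin n => gaussianReal 0 1) := by
    funext t
    have h1 : ∫ u, W (Function.update x i t + σ • u)
        ∂(Measure.pi fun _ : Fin n => gaussianReal 0 1)
        = ∫ u, g (u + ((t - x i)/σ) • (Pi.single i 1 : Fin n → ℝ))
            ∂(Measure.pi fun _ : Fin n => gaussianReal 0 1) :=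
      integral_congr_ae (ae_of_all _ fun u => congrArg W (harg t u))
    rw [h1]
    exact shift_lemma i g hg M hgM _
  rw [hfun]
  have hH := hasDeriv_H i g hg M hgM
  have hc : HasDerivAt (fun t : ℝ => (t - x i)/σ) (1/σ) (x i) := by
    have := ((hasDerivAt_id (x i)).sub_const (x i)).div_const σ
    simpa using this
  have hc0 : (x i - x i)/σ = 0 := by simp
  have hH' : HasDerivAt (fun c : ℝ => ∫ u, g u * Real.exp (c * u i - c^2/2)
      ∂(Measure.pi fun _ : Fin n => gaussianReal 0 1))
      (∫ u, g u * u i ∂(Measure.pi fun _ : Fin n => gaussianReal 0 1)) ((x i - x i)/σ) := by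
    rw [hc0]; exact hH
  have comp := HasDerivAt.comp (x i) hH' hc
  have : (fun t : ℝ => ∫ u, g u * Real.exp (((t - x i)/σ) * u i - ((t - x i)/σ)^2/2)
      ∂(Measure.pi fun _ : Fin n => gaussianReal 0 1))
      = (fun c : ℝ => ∫ u, g u * Real.exp (c * u i - c^2/2)
          ∂(Measure.pi fun _ : Fin n => gaussianReal 0 1)) ∘ (fun t => (t - x i)/σ) := rfl
  rw [this]
  refine comp.congr_deriv ?_
  symm
  rw [show (fun u : Fin n → ℝ => W (x + σ • u) * u i) = fun u => g u * u i from rfl, mul_comm]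
end

section
/- Let M̂ be defined recursively by M̂(1, S) := f 1 (S) and, for 2 ≤ i ≤ n, M̂(i, S) := max over B ⊆ S of (M̂(i − 1, S \ B) + f i (B)). Then the maximum over all S ⊆ Fin m of M̂(n, S) equals the maximum, over all tuples (A₁, …, Aₙ) of pairwise disjoint bundles Aᵢ ⊆ Fin m (not required to cover all items), of Σ_{i=1}^{n} f i (A i). That is, the dynamic program correctly computes the maximum affine welfare over all allocations. -/
open Finset

open scoped Classical in
/-- A valid partial allocation of the first `i` bidders, covering exactly `S`. -/
def dpGood {n m : ℕ} (i : ℕ) (S : Finset (Fin m)) (A : Fin n → Finset (Fin m)) : Prop :=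
  (∀ j k : Fin n, j ≠ k → Disjoint (A j) (A k)) ∧ (∀ j : Fin n, i ≤ (j : ℕ) → A j = ∅) ∧
    Finset.univ.biUnion A = S

open scoped Classical in
lemma dpGood_nonempty {n m : ℕ} (hn : 1 ≤ n) (i : ℕ) (hi : 1 ≤ i) (S : Finset (Fin m)) :
    ((Finset.univ : Finset (Fin n → Finset (Fin m))).filter (dpGood i S)).Nonempty := by
  refine ⟨fun j => if (j : ℕ) = 0 then S else ∅, ?_⟩
  simp only [mem_filter, mem_univ, true_and]
  refine ⟨?_, ?_, ?_⟩
  · intro j k hjk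
    by_cases hj : (j : ℕ) = 0 <;> by_cases hk : (k : ℕ) = 0 <;> simp_all
    exact absurd (Fin.ext (hj.trans hk.symm)) hjk
  · intro j hj
    have : (j : ℕ) ≠ 0 := by omega
    simp [this]
  · ext x
    simp only [mem_biUnion, mem_univ, true_and]
    constructor
    · rintro ⟨j, hj⟩
      by_cases hj0 : (j : ℕ) = 0 <;> simp_all
    · intro hx
      exact ⟨⟨0, hn⟩, by simpa using hx⟩

open scoped Classical in
lemma dp_key {n m : ℕ} (hn : 1 ≤ n) (f : Fin n → Finset (Fin m) → ℝ)
    (Mhat : ℕ → Finset (Fin m) → ℝ)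
    (hbase : ∀ S : Finset (Fin m), Mhat 1 S = f ⟨0, hn⟩ S)
    (hrec : ∀ (i : ℕ) (h2 : 2 ≤ i) (hin : i ≤ n), ∀ S : Finset (Fin m),
      Mhat i S = S.powerset.sup' (Finset.powerset_nonempty S)
        (fun B => Mhat (i - 1) (S \ B) + f ⟨i - 1, Nat.lt_of_lt_of_le (Nat.sub_lt (by omega) Nat.one_pos) hin⟩ B)) :
    ∀ i (hi : 1 ≤ i) (hin : i ≤ n) (S : Finset (Fin m)),
      Mhat i S = ((Finset.univ : Finset (Fin n → Finset (Fin m))).filter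
          (dpGood i S)).sup' (dpGood_nonempty hn i hi S)
        (fun A => ∑ j ∈ Finset.univ.filter (fun j : Fin n => (j : ℕ) < i), f j (A j)) := by
  intro i hi
  induction i, hi using Nat.le_induction with
  | base =>
    intro hin S
    rw [hbase]
    have hfilt : Finset.univ.filter (fun j : Fin n => (j : ℕ) < 1) = {⟨0, hn⟩} := by
      ext j; simp [Fin.ext_iff]
    apply le_antisymm
    · exact Finset.le_sup'_of_le _ ((dpGood_nonempty hn 1 le_rfl S).choose_spec) (by
        have hA := (dpGood_nonempty hn 1 le_rfl S).choose_spec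
        set A := (dpGood_nonempty hn 1 le_rfl S).choose
        rw [mem_filter] at hA
        obtain ⟨-, -, h1, hU⟩ := hA
        have hA0 : A ⟨0, hn⟩ = S := by
          rw [← hU]; ext x
          simp only [mem_biUnion, mem_univ, true_and]
          constructor
          · exact fun hx => ⟨⟨0, hn⟩, hx⟩
          · rintro ⟨j, hj⟩
            by_cases hj0 : (j : ℕ) = 0
            · have : j = ⟨0, hn⟩ := Fin.ext hj0
              rwa [this] at hj
            · rw [h1 j (by omega)] at hj; simp at hj
        rw [hfilt, Finset.sum_singleton, hA0])
    · apply Finset.sup'_le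
      intro A hA
      rw [mem_filter] at hA
      obtain ⟨-, -, h1, hU⟩ := hA
      have hA0 : A ⟨0, hn⟩ = S := by
        rw [← hU]; ext x
        simp only [mem_biUnion, mem_univ, true_and]
        constructor
        · exact fun hx => ⟨⟨0, hn⟩, hx⟩
        · rintro ⟨j, hj⟩
          by_cases hj0 : (j : ℕ) = 0
          · have : j = ⟨0, hn⟩ := Fin.ext hj0
            rwa [this] at hj
          · rw [h1 j (by omega)] at hj; simp at hj
      rw [hfilt, Finset.sum_singleton, hA0]
  | succ i hi IH =>
    intro hin S
    have hi' : i < n := by omega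
    have hIi : Fin.mk i hi' = (⟨i + 1 - 1, by omega⟩ : Fin n) := by
      apply Fin.ext; simp
    rw [hrec (i + 1) (by omega) hin S]
    simp only [Nat.add_sub_cancel]
    have hfilt : Finset.univ.filter (fun j : Fin n => (j : ℕ) < i + 1) =
        insert ⟨i, hi'⟩ (Finset.univ.filter (fun j : Fin n => (j : ℕ) < i)) := by
      ext j; simp [Fin.ext_iff]; omega
    have hnotmem : (⟨i, hi'⟩ : Fin n) ∉ Finset.univ.filter (fun j : Fin n => (j : ℕ) < i) := by
      simp
    apply le_antisymm
    · apply Finset.sup'_le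
      intro B hB
      rw [mem_powerset] at hB
      rw [IH (by omega) (S \ B)]
      rw [Finset.sup'_add]
      apply Finset.sup'_le
      intro A hA
      rw [mem_filter] at hA
      obtain ⟨-, hdisj, hempty, hU⟩ := hA
      have hAi : A ⟨i, hi'⟩ = ∅ := hempty _ le_rfl
      have hsub : ∀ j : Fin n, A j ⊆ S \ B := fun j => hU ▸ subset_biUnion_of_mem A (mem_univ j)
      set A' := Function.update A ⟨i, hi'⟩ B with hA'
      have hA'mem : A' ∈ Finset.univ.filter (dpGood (i + 1) S) := by
        rw [mem_filter]
        refine ⟨mem_univ _, ?_, ?_, ?_⟩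
        · intro j k hjk
          by_cases hj : j = ⟨i, hi'⟩
          · subst hj
            have hk : k ≠ (⟨i, hi'⟩ : Fin n) := fun h => hjk h.symm
            rw [hA', Function.update_self, Function.update_of_ne hk]
            exact (Finset.sdiff_disjoint.mono_left (hsub k)).symm
          · by_cases hk : k = ⟨i, hi'⟩
            · subst hk
              rw [hA', Function.update_self, Function.update_of_ne hj]
              exact Finset.sdiff_disjoint.mono_left (hsub j)
            · rw [hA', Function.update_of_ne hj, Function.update_of_ne hk]
              exact hdisj j k hjk
        · intro j hj
          have hji : j ≠ (⟨i, hi'⟩ : Fin n) := by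
            intro h; rw [h] at hj; simp only [Fin.val_mk] at hj; omega
          rw [hA', Function.update_of_ne hji]
          exact hempty j (by omega)
        · ext x
          simp only [mem_biUnion, mem_univ, true_and]
          constructor
          · rintro ⟨j, hj⟩
            by_cases hji : j = ⟨i, hi'⟩
            · subst hji; rw [hA', Function.update_self] at hj; exact hB hj
            · rw [hA', Function.update_of_ne hji] at hj
              exact (mem_sdiff.1 (hsub j hj)).1
          · intro hx
            by_cases hxB : x ∈ B
            · exact ⟨⟨i, hi'⟩, by rw [hA', Function.update_self]; exact hxB⟩
            · have : x ∈ Finset.univ.biUnion A := by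
                rw [hU]; exact mem_sdiff.2 ⟨hx, hxB⟩
              obtain ⟨j, -, hj⟩ := mem_biUnion.1 this
              have hji : j ≠ (⟨i, hi'⟩ : Fin n) := by
                rintro rfl; rw [hAi] at hj; simp at hj
              exact ⟨j, by rw [hA', Function.update_of_ne hji]; exact hj⟩
      refine Finset.le_sup'_of_le _ hA'mem (le_of_eq ?_)
      rw [hfilt, Finset.sum_insert hnotmem]
      have h1 : A' ⟨i, hi'⟩ = B := Function.update_self _ _ _
      have h2 : ∀ j ∈ Finset.univ.filter (fun j : Fin n => (j : ℕ) < i),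
          f j (A' j) = f j (A j) := by
        intro j hj
        rw [mem_filter] at hj
        have hji : j ≠ (⟨i, hi'⟩ : Fin n) := by
          intro h; rw [h] at hj; exact absurd hj.2 (by simp)
        rw [hA', Function.update_of_ne hji]
      rw [h1, Finset.sum_congr rfl h2, add_comm]
    · apply Finset.sup'_le
      intro A hA
      rw [mem_filter] at hA
      obtain ⟨-, hdisj, hempty, hU⟩ := hA
      set B := A ⟨i, hi'⟩ with hBdef
      have hBS : B ⊆ S := hU ▸ subset_biUnion_of_mem A (mem_univ _)
      refine le_trans ?_ (Finset.le_sup' _ (mem_powerset.2 hBS))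
      set A'' := Function.update A ⟨i, hi'⟩ (∅ : Finset (Fin m)) with hA''
      have hA''mem : A'' ∈ Finset.univ.filter (dpGood i (S \ B)) := by
        rw [mem_filter]
        refine ⟨mem_univ _, ?_, ?_, ?_⟩
        · intro j k hjk
          by_cases hj : j = ⟨i, hi'⟩
          · subst hj; rw [hA'', Function.update_self]; exact disjoint_empty_left _
          · by_cases hk : k = ⟨i, hi'⟩
            · subst hk; rw [hA'', Function.update_self]; exact disjoint_empty_right _
            · rw [hA'', Function.update_of_ne hj, Function.update_of_ne hk]
              exact hdisj j k hjk
        · intro j hj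
          by_cases hji : j = ⟨i, hi'⟩
          · subst hji; rw [hA'', Function.update_self]
          · rw [hA'', Function.update_of_ne hji]
            have : ¬ (j : ℕ) = i := fun h => hji (Fin.ext h)
            exact hempty j (by omega)
        · ext x
          simp only [mem_biUnion, mem_univ, true_and, mem_sdiff]
          constructor
          · rintro ⟨j, hj⟩
            by_cases hji : j = ⟨i, hi'⟩
            · subst hji; rw [hA'', Function.update_self] at hj; simp at hj
            · rw [hA'', Function.update_of_ne hji] at hj
              refine ⟨hU ▸ mem_biUnion.2 ⟨j, mem_univ j, hj⟩, ?_⟩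
              exact fun hxB => Finset.disjoint_left.1 (hdisj j ⟨i, hi'⟩ hji) hj hxB
          · rintro ⟨hx, hxB⟩
            rw [← hU] at hx
            obtain ⟨j, -, hj⟩ := mem_biUnion.1 hx
            have hji : j ≠ (⟨i, hi'⟩ : Fin n) := by
              rintro rfl; exact hxB hj
            exact ⟨j, by rw [hA'', Function.update_of_ne hji]; exact hj⟩
      have hsum : ∑ j ∈ Finset.univ.filter (fun j : Fin n => (j : ℕ) < i + 1), f j (A j) =
          (∑ j ∈ Finset.univ.filter (fun j : Fin n => (j : ℕ) < i), f j (A'' j)) +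
            f ⟨i, hi'⟩ B := by
        rw [hfilt, Finset.sum_insert hnotmem, add_comm]
        congr 1
        apply Finset.sum_congr rfl
        intro j hj
        rw [mem_filter] at hj
        have hji : j ≠ (⟨i, hi'⟩ : Fin n) := by
          intro h; rw [h] at hj; exact absurd hj.2 (by simp)
        rw [hA'', Function.update_of_ne hji]
      rw [hsum, IH (by omega) (S \ B)]
      exact add_le_add (Finset.le_sup'
        (fun A : Fin n → Finset (Fin m) =>
          ∑ j ∈ Finset.univ.filter (fun j : Fin n => (j : ℕ) < i), f j (A j)) hA''mem) le_rfl

/-- Let `M̂` be defined recursively by `M̂(1, S) = f 1 (S)` and, for `2 ≤ i ≤ n`,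
`M̂(i, S) = max_{B ⊆ S} (M̂(i − 1, S \ B) + f i (B))`. Then `max_{S ⊆ [m]} M̂(n, S)` equals the
maximum, over all tuples `(A₁, …, Aₙ)` of pairwise disjoint bundles, of `Σ_{i=1}^{n} f i (A i)`:
the dynamic program computes the maximum affine welfare over all allocations. -/
theorem dp_computes_max_affine_welfare (n m : ℕ) (hn : 1 ≤ n)
    (f : Fin n → Finset (Fin m) → ℝ)
    (Mhat : ℕ → Finset (Fin m) → ℝ)
    (hbase : ∀ S : Finset (Fin m), Mhat 1 S = f ⟨0, hn⟩ S)
    (hrec : ∀ (i : ℕ) (h2 : 2 ≤ i) (hin : i ≤ n), ∀ S : Finset (Fin m),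
      Mhat i S = S.powerset.sup' (Finset.powerset_nonempty S)
        (fun B => Mhat (i - 1) (S \ B) + f ⟨i - 1, by omega⟩ B)) :
    (Finset.univ : Finset (Finset (Fin m))).sup' ⟨∅, Finset.mem_univ ∅⟩ (Mhat n) =
      ((Finset.univ : Finset (Fin n → Finset (Fin m))).filter
          (fun A => ∀ j k : Fin n, j ≠ k → Disjoint (A j) (A k))).sup'
        ⟨fun _ => ∅, by simp⟩ (fun A => ∑ i, f i (A i)) := by
  classical
  have huniv : Finset.univ.filter (fun j : Fin n => (j : ℕ) < n) =
      (Finset.univ : Finset (Fin n)) := by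
    ext j; simp [j.isLt]
  apply le_antisymm
  · apply Finset.sup'_le
    intro S _
    rw [dp_key hn f Mhat hbase hrec n hn le_rfl S]
    apply Finset.sup'_le
    intro A hA
    rw [Finset.mem_filter] at hA
    obtain ⟨-, hdisj, -, -⟩ := hA
    refine Finset.le_sup'_of_le _ (Finset.mem_filter.2 ⟨mem_univ _, hdisj⟩) (le_of_eq ?_)
    rw [huniv]
  · apply Finset.sup'_le
    intro A hA
    rw [Finset.mem_filter] at hA
    have hmem : A ∈ Finset.univ.filter (dpGood n (Finset.univ.biUnion A)) := by
      rw [Finset.mem_filter]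
      exact ⟨mem_univ _, hA.2, fun j hj => absurd j.isLt (by omega), rfl⟩
    refine Finset.le_sup'_of_le (Mhat n) (mem_univ (Finset.univ.biUnion A)) ?_
    rw [dp_key hn f Mhat hbase hrec n hn le_rfl (Finset.univ.biUnion A)]
    refine Finset.le_sup'_of_le _ hmem (le_of_eq ?_)
    rw [huniv]
end

section
/- (AMA is dominant strategy incentive compatible.) Fix a bidder i, her true valuation vᵢ : Finset (Fin m) → ℝ, bids b_{-i} of the other bidders, and an arbitrary misreport bᵢ' : Finset (Fin m) → ℝ. Let b be the truthful profile in which bidder i bids vᵢ and the others bid b_{-i}, and let b' be the profile in which bidder i bids bᵢ' and the others bid b_{-i}. Then for every allocation A* maximizing AW(b, ·) over Alloc and every allocation A' maximizing AW(b', ·) over Alloc, the truthful utility dominates: vᵢ(A* i) − pᵢ(b, A*) ≥ vᵢ(A' i) − pᵢ(b', A'). -/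
open Finset

noncomputable section

/-- The finite set of allocations: functions assigning each bidder a bundle of items,
with pairwise disjoint bundles. -/
def Alloc (n m : ℕ) : Finset (Fin n → Finset (Fin m)) :=
  Finset.univ.filter fun A => ∀ j k : Fin n, j ≠ k → Disjoint (A j) (A k)

lemma Alloc_nonempty (n m : ℕ) : (Alloc n m).Nonempty :=
  ⟨fun _ => ∅, by simp [Alloc]⟩

/-- Affine welfare of allocation `A` under bid profile `b`. -/
def AW {n m : ℕ} (w : Fin n → ℝ) (lam : (Fin n → Finset (Fin m)) → ℝ)
    (b : Fin n → Finset (Fin m) → ℝ) (A : Fin n → Finset (Fin m)) : ℝ :=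
  (∑ i, w i * b i (A i)) + lam A

/-- Affine welfare of allocation `A` under bid profile `b`, excluding bidder `i`. -/
def AWmi {n m : ℕ} (w : Fin n → ℝ) (lam : (Fin n → Finset (Fin m)) → ℝ)
    (b : Fin n → Finset (Fin m) → ℝ) (i : Fin n) (A : Fin n → Finset (Fin m)) : ℝ :=
  (∑ j ∈ Finset.univ.erase i, w j * b j (A j)) + lam A

/-- AMA payment of bidder `i` under bid profile `b`, given winning allocation `Astar`. -/
def pay {n m : ℕ} (w : Fin n → ℝ) (lam : (Fin n → Finset (Fin m)) → ℝ)
    (b : Fin n → Finset (Fin m) → ℝ) (i : Fin n) (Astar : Fin n → Finset (Fin m)) : ℝ :=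
  (1 / w i) * ((Alloc n m).sup' (Alloc_nonempty n m) (AWmi w lam b i) - AWmi w lam b i Astar)

end

/-- **AMA is DSIC.** For bidder `i` with true valuation `vi`, others' bids `bmi`,
and any misreport `bi'`, the truthful utility (under any maximizer of the truthful profile)
dominates the misreport utility (under any maximizer of the misreport profile). -/
theorem AMA_DSIC {n m : ℕ} (w : Fin n → ℝ) (hw : ∀ i, 0 < w i)
    (lam : (Fin n → Finset (Fin m)) → ℝ) (i : Fin n)
    (vi : Finset (Fin m) → ℝ) (bmi : Fin n → Finset (Fin m) → ℝ)
    (bi' : Finset (Fin m) → ℝ)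
    (Astar : Fin n → Finset (Fin m)) (hAstar : Astar ∈ Alloc n m)
    (hmax : ∀ A ∈ Alloc n m,
      AW w lam (Function.update bmi i vi) A ≤ AW w lam (Function.update bmi i vi) Astar)
    (A' : Fin n → Finset (Fin m)) (hA' : A' ∈ Alloc n m)
    (hmax' : ∀ A ∈ Alloc n m,
      AW w lam (Function.update bmi i bi') A ≤ AW w lam (Function.update bmi i bi') A') :
    vi (Astar i) - pay w lam (Function.update bmi i vi) i Astar ≥
      vi (A' i) - pay w lam (Function.update bmi i bi') i A' := by
  have hupd : ∀ (f : Finset (Fin m) → ℝ) (A : Fin n → Finset (Fin m)),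
      AWmi w lam (Function.update bmi i f) i A = AWmi w lam bmi i A := by
    intro f A
    unfold AWmi
    congr 1
    refine Finset.sum_congr rfl fun j hj => ?_
    rw [Function.update_of_ne (Finset.ne_of_mem_erase hj)]
  have hsplit : ∀ (f : Finset (Fin m) → ℝ) (A : Fin n → Finset (Fin m)),
      AW w lam (Function.update bmi i f) A = w i * f (A i) + AWmi w lam bmi i A := by
    intro f A
    rw [← hupd f A]
    unfold AW AWmi
    rw [← Finset.add_sum_erase _ _ (Finset.mem_univ i), Function.update_self]
    ring
  have hsup : (Alloc n m).sup' (Alloc_nonempty n m) (AWmi w lam (Function.update bmi i vi) i)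
      = (Alloc n m).sup' (Alloc_nonempty n m) (AWmi w lam (Function.update bmi i bi') i) := by
    refine Finset.sup'_congr _ rfl fun A _ => ?_
    rw [hupd, hupd]
  have hkey : w i * vi (A' i) + AWmi w lam bmi i A'
      ≤ w i * vi (Astar i) + AWmi w lam bmi i Astar := by
    have := hmax A' hA'
    rwa [hsplit, hsplit] at this
  unfold pay
  rw [hsup, hupd, hupd]
  have hwi := hw i
  rw [ge_iff_le, div_mul_eq_mul_div, div_mul_eq_mul_div, sub_div', sub_div',
    div_le_div_iff₀ hwi hwi] <;> try positivity
  nlinarith [hkey]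
end

section
/- (Truthful utility formula, independent of tie-breaking.) Fix a bidder i, her true valuation vᵢ, and bids b_{-i} of the other bidders, and let b be the truthful profile in which bidder i bids vᵢ and the others bid b_{-i}. Then for every allocation A* maximizing AW(b, ·) over Alloc, bidder i's truthful utility equals vᵢ(A* i) − pᵢ(b, A*) = (1 / w i) * ((max over A ∈ Alloc of AW(b, A)) − (max over A ∈ Alloc of AW₋ᵢ(b, A))); in particular this value does not depend on which maximizer A* is selected. -/
open Finset

/-- **Truthful utility formula.** Under truthful bidding, for every winning
allocation `Astar`, bidder `i`'s utility equals
`(1 / w i) * (max_A AW(b, A) − max_A AW₋ᵢ(b, A))`, independently of the tie-breaking. -/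
theorem AMA_truthful_utility_formula {n m : ℕ} (w : Fin n → ℝ) (hw : ∀ i, 0 < w i)
    (lam : (Fin n → Finset (Fin m)) → ℝ) (i : Fin n)
    (vi : Finset (Fin m) → ℝ) (bmi : Fin n → Finset (Fin m) → ℝ)
    (Astar : Fin n → Finset (Fin m)) (hAstar : Astar ∈ Alloc n m)
    (hmax : ∀ A ∈ Alloc n m,
      AW w lam (Function.update bmi i vi) A ≤ AW w lam (Function.update bmi i vi) Astar) :
    vi (Astar i) - pay w lam (Function.update bmi i vi) i Astar =
      (1 / w i) *
        ((Alloc n m).sup' (Alloc_nonempty n m) (AW w lam (Function.update bmi i vi)) -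
          (Alloc n m).sup' (Alloc_nonempty n m) (AWmi w lam (Function.update bmi i vi) i)) := by
  set b := Function.update bmi i vi with hb
  have hsup : (Alloc n m).sup' (Alloc_nonempty n m) (AW w lam b) = AW w lam b Astar :=
    le_antisymm (Finset.sup'_le _ _ hmax) (Finset.le_sup' _ hAstar)
  have hsplit : AW w lam b Astar = w i * vi (Astar i) + AWmi w lam b i Astar := by
    have := Finset.add_sum_erase Finset.univ (fun j => w j * b j (Astar j)) (Finset.mem_univ i)
    simp only [AW, AWmi, ← this, hb, Function.update_self]
    rw [← Finset.add_sum_erase _ _ (Finset.mem_univ i), Function.update_self]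
    ring
  have hwi : w i ≠ 0 := (hw i).ne'
  rw [hsup, pay, hsplit]
  field_simp
  ring
end

section
/- (Misreport utility upper bound.) Fix a bidder i, her true valuation vᵢ, and bids b_{-i} of the other bidders. For any bid bᵢ' of bidder i, let b' be the profile in which bidder i bids bᵢ' and the others bid b_{-i}, and let b be the truthful profile (vᵢ, b_{-i}). Then for every allocation A' maximizing AW(b', ·) over Alloc, bidder i's utility from misreporting is bounded by vᵢ(A' i) − pᵢ(b', A') ≤ (1 / w i) * ((max over A ∈ Alloc of AW(b, A)) − (max over A ∈ Alloc of AW₋ᵢ(b, A))). -/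
open Finset

/-- **Misreport utility upper bound.** For any misreport `bi'` of bidder `i` and
any maximizer `A'` of the misreport profile, the misreport utility is at most
`(1 / w i) * (max_A AW(b, A) − max_A AW₋ᵢ(b, A))` where `b` is the truthful profile. -/
theorem AMA_misreport_utility_le {n m : ℕ} (w : Fin n → ℝ) (hw : ∀ i, 0 < w i)
    (lam : (Fin n → Finset (Fin m)) → ℝ) (i : Fin n)
    (vi : Finset (Fin m) → ℝ) (bmi : Fin n → Finset (Fin m) → ℝ)
    (bi' : Finset (Fin m) → ℝ)
    (A' : Fin n → Finset (Fin m)) (hA' : A' ∈ Alloc n m)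
    (hmax' : ∀ A ∈ Alloc n m,
      AW w lam (Function.update bmi i bi') A ≤ AW w lam (Function.update bmi i bi') A') :
    vi (A' i) - pay w lam (Function.update bmi i bi') i A' ≤
      (1 / w i) *
        ((Alloc n m).sup' (Alloc_nonempty n m) (AW w lam (Function.update bmi i vi)) -
          (Alloc n m).sup' (Alloc_nonempty n m) (AWmi w lam (Function.update bmi i vi) i)) := by
  have hwi := hw i
  have hAWmi : ∀ A, AWmi w lam (Function.update bmi i bi') i A
      = AWmi w lam (Function.update bmi i vi) i A := by
    intro A
    unfold AWmi
    congr 1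
    refine Finset.sum_congr rfl fun j hj => ?_
    rw [Finset.mem_erase] at hj
    rw [Function.update_of_ne hj.1, Function.update_of_ne hj.1]
  have hsplit : AW w lam (Function.update bmi i vi) A' =
      w i * vi (A' i) + AWmi w lam (Function.update bmi i vi) i A' := by
    unfold AW AWmi
    rw [← Finset.add_sum_erase _ _ (Finset.mem_univ i), Function.update_self]
    ring
  have hsup : (Alloc n m).sup' (Alloc_nonempty n m) (AWmi w lam (Function.update bmi i bi') i)
      = (Alloc n m).sup' (Alloc_nonempty n m) (AWmi w lam (Function.update bmi i vi) i) :=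
    Finset.sup'_congr _ rfl fun A _ => hAWmi A
  have h1 : AW w lam (Function.update bmi i vi) A' ≤
      (Alloc n m).sup' (Alloc_nonempty n m) (AW w lam (Function.update bmi i vi)) :=
    Finset.le_sup' _ hA'
  unfold pay
  rw [hsup, hAWmi]
  rw [hsplit] at h1
  rw [sub_le_iff_le_add, ← mul_add]
  have : (1 / w i) *
      ((Alloc n m).sup' (Alloc_nonempty n m) (AW w lam (Function.update bmi i vi)) -
        (Alloc n m).sup' (Alloc_nonempty n m) (AWmi w lam (Function.update bmi i vi) i) +
        ((Alloc n m).sup' (Alloc_nonempty n m) (AWmi w lam (Function.update bmi i vi) i) -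
          AWmi w lam (Function.update bmi i vi) i A')) =
      ((Alloc n m).sup' (Alloc_nonempty n m) (AW w lam (Function.update bmi i vi)) -
        AWmi w lam (Function.update bmi i vi) i A') / w i := by ring
  rw [this, le_div_iff₀ hwi]
  linarith
end

section
/- (Revenue decomposition R = Z + F.) Let v be a valuation profile and A* any allocation maximizing AW(v, ·) over Alloc. Then the total AMA revenue decomposes as Σ_{i} pᵢ(v, A*) = (Σ_{i} v i (A* i)) + (Σ_{i} (1 / w i) * (max over A ∈ Alloc of AW₋ᵢ(v, A))) − ((Σ_{i} 1 / w i) * (max over A ∈ Alloc of AW(v, A))), i.e., the revenue equals the social welfare of the winning allocation plus the continuous component F. -/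
open Finset

/-- **Revenue decomposition `R = Z + F`.** For a valuation profile `v` and any
allocation `Astar` maximizing `AW(v, ·)`, the total AMA revenue equals the social welfare of the
winning allocation plus the continuous component `F`:
`Σᵢ pᵢ(v, A*) = Σᵢ v i (A* i) + Σᵢ (1/wᵢ) maxₐ AW₋ᵢ(v, A) − (Σᵢ 1/wᵢ) maxₐ AW(v, A)`. -/
theorem AMA_revenue_decomposition {n m : ℕ} (w : Fin n → ℝ) (hw : ∀ i, 0 < w i)
    (lam : (Fin n → Finset (Fin m)) → ℝ)
    (v : Fin n → Finset (Fin m) → ℝ)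
    (Astar : Fin n → Finset (Fin m)) (hAstar : Astar ∈ Alloc n m)
    (hmax : ∀ A ∈ Alloc n m, AW w lam v A ≤ AW w lam v Astar) :
    ∑ i, pay w lam v i Astar =
      (∑ i, v i (Astar i)) +
        (∑ i, (1 / w i) * (Alloc n m).sup' (Alloc_nonempty n m) (AWmi w lam v i)) -
        (∑ i, 1 / w i) * (Alloc n m).sup' (Alloc_nonempty n m) (AW w lam v) := by
  have hsup : (Alloc n m).sup' (Alloc_nonempty n m) (AW w lam v) = AW w lam v Astar :=
    le_antisymm (Finset.sup'_le _ _ hmax) (Finset.le_sup' _ hAstar)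
  have hmi : ∀ i, AWmi w lam v i Astar = AW w lam v Astar - w i * v i (Astar i) := by
    intro i
    have := Finset.sum_erase_add Finset.univ (fun j => w j * v j (Astar j)) (Finset.mem_univ i)
    simp only [AWmi, AW]
    linarith
  rw [hsup]
  have hpay : ∀ i : Fin n, pay w lam v i Astar =
      v i (Astar i) + (1 / w i) * (Alloc n m).sup' (Alloc_nonempty n m) (AWmi w lam v i)
        - (1 / w i) * AW w lam v Astar := by
    intro i
    have hwne : w i ≠ 0 := (hw i).ne'
    rw [pay, hmi i]
    field_simp
    ring
  rw [Finset.sum_congr rfl (fun i _ => hpay i), Finset.sum_sub_distrib, Finset.sum_add_distrib,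
    ← Finset.sum_mul]
end
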